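/- If S ∈ ℝ^{3×3} is a diagonal matrix, then the first moment ∫_{SO(3)} Q · exp(tr(S Q)) dμ(Q) is a diagonal matrix. -/

import Mathlib

open MeasureTheory Matrix

noncomputable section

/-- The space of real `3 × 3` matrices. -/
abbrev M3 := Matrix (Fin 3) (Fin 3) ℝ

instance : MeasurableSpace M3 := (inferInstance : MeasurableSpace (Fin 3 → Fin 3 → ℝ))

/-- The special orthogonal group `SO(3)`: real `3 × 3` matrices `R` with
`Rᵀ R = 1` and `det R = 1`. -/
def SO3 : Set M3 := {R | Rᵀ * R = 1 ∧ R.det = 1}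

/-- `μ` is the Haar probability measure of the compact group `SO(3)`, viewed as a measure
on the ambient space of `3 × 3` matrices: it is a probability measure carried by `SO3`
which is invariant under left and right translation by elements of `SO3`. -/
structure IsHaarSO3 (μ : Measure M3) : Prop where
  prob : IsProbabilityMeasure μ
  carried : μ SO3ᶜ = 0
  map_left : ∀ U ∈ SO3, Measure.map (fun R => U * R) μ = μ
  map_right : ∀ V ∈ SO3, Measure.map (fun R => R * V) μ = μ

lemma off_diag_zero (μ : Measure M3) (hμ : IsHaarSO3 μ) (s : Fin 3 → ℝ)
    {i j : Fin 3} (hij : i ≠ j) :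
    ∫ Q, Q i j * Real.exp ((Matrix.diagonal s * Q).trace) ∂μ = 0 := by
  classical
  haveI : OpensMeasurableSpace M3 :=
    (inferInstance : OpensMeasurableSpace (Fin 3 → Fin 3 → ℝ))
  haveI : BorelSpace M3 := (inferInstance : BorelSpace (Fin 3 → Fin 3 → ℝ))
  set ε : Fin 3 → ℝ := fun k => if k = i then 1 else -1 with hεdef
  have hε : ∀ k, ε k * ε k = 1 := by
    intro k; simp only [hεdef]; split <;> norm_num
  have hεε : ε * ε = 1 := funext hε
  set D : M3 := Matrix.diagonal ε with hDdef
  have hDD : D * D = 1 := by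
    rw [hDdef, Matrix.diagonal_mul_diagonal]
    simp [hε]
  have hDSO3 : D ∈ SO3 := by
    constructor
    · rw [hDdef, Matrix.diagonal_transpose, Matrix.diagonal_mul_diagonal]
      simp [hε]
    · rw [hDdef, Matrix.det_diagonal, Fin.prod_univ_three]
      fin_cases i <;> fin_cases j <;> simp_all [hεdef]
  have hcomm : Matrix.diagonal s * D = D * Matrix.diagonal s := by
    rw [hDdef, Matrix.diagonal_mul_diagonal, Matrix.diagonal_mul_diagonal]
    simp [mul_comm]
  -- continuity of the integrand
  have htrcont : Continuous fun Q : M3 => (Matrix.diagonal s * Q).trace := by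
    have heq : (fun Q : M3 => (Matrix.diagonal s * Q).trace)
        = fun Q : M3 => ∑ k, s k * Q k k := by
      funext Q
      simp [Matrix.trace, Matrix.diag, Matrix.diagonal_mul]
    rw [heq]
    exact continuous_finset_sum _ fun k _ =>
      continuous_const.mul ((continuous_apply k).comp (continuous_apply k))
  have hcont : ∀ a b : Fin 3,
      Continuous fun Q : M3 => Q a b * Real.exp ((Matrix.diagonal s * Q).trace) :=
    fun a b => Continuous.mul
      (((continuous_apply b).comp (continuous_apply a) : Continuous fun Q : M3 => Q a b))
      ((Real.continuous_exp.comp htrcont :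
        Continuous fun Q : M3 => Real.exp ((Matrix.diagonal s * Q).trace)))
  set g : M3 → ℝ := fun Q => Q i j * Real.exp ((Matrix.diagonal s * Q).trace) with hgdef
  have hgc : Continuous g := hcont i j
  have hmulR : Continuous fun R : M3 => R * D := continuous_id.matrix_mul continuous_const
  have hmulL : Continuous fun R : M3 => D * R := continuous_const.matrix_mul continuous_id
  -- invariance
  have step1 : ∫ Q, g Q ∂μ = ∫ Q, g (Q * D) ∂μ := by
    conv_lhs => rw [← hμ.map_right D hDSO3]
    exact integral_map hmulR.measurable.aemeasurable hgc.aestronglyMeasurable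
  have step2 : ∫ Q, g (Q * D) ∂μ = ∫ Q, g (D * Q * D) ∂μ := by
    conv_lhs => rw [← hμ.map_left D hDSO3]
    exact integral_map hmulL.measurable.aemeasurable
      (hgc.comp (hmulR)).aestronglyMeasurable
  -- compute g (D * Q * D)
  have htr : ∀ Q : M3, (Matrix.diagonal s * (D * Q * D)).trace
      = (Matrix.diagonal s * Q).trace := by
    intro Q
    have h1 : Matrix.diagonal s * (D * Q * D) = (Matrix.diagonal s * (D * Q)) * D := by
      noncomm_ring
    have h2 : D * (Matrix.diagonal s * (D * Q)) = (D * Matrix.diagonal s * D) * Q := by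
      noncomm_ring
    have h3 : D * Matrix.diagonal s * D = Matrix.diagonal s := by
      rw [← hcomm, mul_assoc, hDD, mul_one]
    rw [h1, Matrix.trace_mul_comm, h2, h3]
  have hεi : ε i = 1 := by simp [hεdef]
  have hεj : ε j = -1 := by simp [hεdef, hij.symm]
  have hentry : ∀ Q : M3, (D * Q * D) i j = - Q i j := by
    intro Q
    rw [hDdef]
    rw [Matrix.mul_diagonal, Matrix.diagonal_mul, hεi, hεj]
    ring
  have hneg : ∀ Q : M3, g (D * Q * D) = - g Q := by
    intro Q
    simp only [hgdef, htr Q, hentry Q]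
    ring
  have : ∫ Q, g Q ∂μ = - ∫ Q, g Q ∂μ := by
    conv_lhs => rw [step1, step2]
    simp only [hneg]
    exact integral_neg g
  linarith

/-- If `S` is diagonal then the first moment `∫ Q exp(tr(S Q)) dμ(Q)` is a diagonal
matrix. -/
theorem first_moment_diagonal (μ : Measure M3) (hμ : IsHaarSO3 μ) (s : Fin 3 → ℝ) :
    ∃ d : Fin 3 → ℝ,
      Matrix.of (fun i j => ∫ Q, Q i j * Real.exp ((Matrix.diagonal s * Q).trace) ∂μ)
        = Matrix.diagonal d := by
  refine ⟨fun i => ∫ Q, Q i i * Real.exp ((Matrix.diagonal s * Q).trace) ∂μ, ?_⟩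
  ext i j
  by_cases h : i = j
  · subst h
    simp [Matrix.diagonal_apply_eq]
  · rw [Matrix.of_apply, Matrix.diagonal_apply_ne _ h]
    exact off_diag_zero μ hμ s h
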